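/- Let (kₙ) be a strictly increasing sequence of positive integers with ∑ₙ 1/kₙ = +∞ and let B be the backward shift on ℓ². Then the set ⋂_{λ ∈ (1,∞)} HC({(λB)^{kₙ}}) is residual in ℓ²; in particular it is nonempty. -/

import Mathlib

set_option maxHeartbeats 1000000
set_option synthInstance.maxHeartbeats 400000

open Finset Metric Set Filter
namespace Stmt11
noncomputable def ee (i : ℕ) : lp (fun _ : ℕ => ℂ) 2 := lp.single 2 i 1

lemma ee_orthonormal : Orthonormal ℂ ee := by
  rw [orthonormal_iff_ite]
  intro i j
  rw [ee, ee, lp.inner_single_left]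
  simp [lp.single_apply, eq_comm, Pi.single_apply]

lemma ee_apply (i n : ℕ) : (ee i : ∀ _ : ℕ, ℂ) n = if n = i then 1 else 0 := by
  rw [ee, lp.single_apply]
  split <;> simp_all [Pi.single_apply]

lemma smul_ee (c : ℂ) (i : ℕ) : c • ee i = lp.single 2 i c := by
  rw [ee, ← lp.single_smul]; norm_num

lemma norm_sq_sum {v : ℕ → lp (fun _ : ℕ => ℂ) 2} (hv : Orthonormal ℂ v) (c : ℕ → ℂ)
    (s : Finset ℕ) : ‖∑ i ∈ s, c i • v i‖^2 = ∑ i ∈ s, ‖c i‖^2 := by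
  have h := hv.inner_sum c c s
  have h2 : (inner ℂ (∑ i ∈ s, c i • v i) (∑ i ∈ s, c i • v i) : ℂ) = (∑ i ∈ s, (‖c i‖:ℂ)^2) := by
    rw [h]; congr 1; ext i; rw [RCLike.conj_mul]; norm_cast
  have h3 := @inner_self_eq_norm_sq ℂ _ _ _ _ (∑ i ∈ s, c i • v i)
  rw [h2, map_sum] at h3
  rw [← h3]
  refine Finset.sum_congr rfl fun i _ => ?_
  rw [show ((‖c i‖:ℂ)^2) = ((‖c i‖^2 : ℝ) : ℂ) by push_cast; ring]
  exact RCLike.ofReal_re _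

/-- the element with coordinates `c` shifted to start at position `p`. -/
noncomputable def sh (c : ℕ → ℂ) (N p : ℕ) : lp (fun _ : ℕ => ℂ) 2 :=
  ∑ i ∈ Finset.range N, c i • ee (i + p)

lemma norm_sh (c : ℕ → ℂ) (N p : ℕ) : ‖sh c N p‖ = ‖sh c N 0‖ := by
  have h1 : ‖sh c N p‖^2 = ∑ i ∈ range N, ‖c i‖^2 := by
    rw [sh]
    exact norm_sq_sum (ee_orthonormal.comp _ (add_left_injective p)) c (range N)
  have h2 : ‖sh c N 0‖^2 = ∑ i ∈ range N, ‖c i‖^2 := by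
    rw [sh]
    exact norm_sq_sum (ee_orthonormal.comp _ (add_left_injective 0)) c (range N)
  nlinarith [norm_nonneg (sh c N p), norm_nonneg (sh c N 0)]

lemma approx (w : lp (fun _ : ℕ => ℂ) 2) {ε : ℝ} (hε : 0 < ε) :
    ∃ N c, ‖w - sh c N 0‖ < ε := by
  have h := (lp.hasSum_single (by norm_num) w).tendsto_sum_nat
  rw [Metric.tendsto_atTop] at h
  obtain ⟨N, hN⟩ := h ε hε
  refine ⟨N, fun i => w i, ?_⟩
  have := hN N le_rfl
  rw [dist_eq_norm] at this
  rw [← norm_neg]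
  convert this using 2
  · rfl
  rw [sh]
  rw [show (∑ i ∈ range N, (w i : ℂ) • ee (i + 0)) = ∑ i ∈ range N, lp.single 2 i (w i) by
    refine Finset.sum_congr rfl fun i _ => ?_; rw [add_zero, smul_ee]]
  abel

section Bact
variable (B : lp (fun _ : ℕ => ℂ) 2 →L[ℂ] lp (fun _ : ℕ => ℂ) 2)
  (hB : ∀ (x : lp (fun _ : ℕ => ℂ) 2) (n : ℕ), B x n = x (n + 1))

include hB

lemma B_ee_succ (i : ℕ) : B (ee (i+1)) = ee i := by
  apply lp.ext; funext n
  rw [hB, ee_apply, ee_apply]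
  simp

lemma B_ee_zero : B (ee 0) = 0 := by
  apply lp.ext; funext n
  rw [hB, ee_apply]
  simp

lemma Bpow_ee (m j : ℕ) : (B^m) (ee (j+m)) = ee j := by
  induction m with
  | zero => simp
  | succ m ih =>
      rw [pow_succ, ContinuousLinearMap.mul_apply, show j + (m+1) = (j+m) + 1 by ring,
        B_ee_succ B hB]
      exact ih

lemma Bpow_ee_zero (m : ℕ) : ∀ i, i < m → (B^m) (ee i) = 0 := by
  induction m with
  | zero => omega
  | succ m ih =>
      intro i hi
      rw [pow_succ, ContinuousLinearMap.mul_apply]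
      cases i with
      | zero => rw [B_ee_zero B hB, map_zero]
      | succ i => rw [B_ee_succ B hB]; exact ih i (by omega)

lemma Bpow_sh (c : ℕ → ℂ) (N m p : ℕ) (h : m ≤ p) :
    (B^m) (sh c N p) = sh c N (p - m) := by
  rw [sh, sh, map_sum]
  refine Finset.sum_congr rfl fun i _ => ?_
  rw [map_smul, show i + p = (i + (p - m)) + m by omega, Bpow_ee B hB]

lemma Bpow_sh_zero (c : ℕ → ℂ) (N m : ℕ) (h : N ≤ m) :
    (B^m) (sh c N 0) = 0 := by
  rw [sh, map_sum]
  refine Finset.sum_eq_zero fun i hi => ?_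
  rw [map_smul, add_zero, Bpow_ee_zero B hB m i (by simp at hi; omega), smul_zero]

end Bact

-- strict mono gap
lemma gap {k : ℕ → ℕ} (hk : StrictMono k) (m d : ℕ) : k m + d ≤ k (m + d) := by
  induction d with
  | zero => simp
  | succ d ih => have := hk (show m + d < m + (d+1) by omega); omega
lemma block_bound {k : ℕ → ℕ} (hk : StrictMono k) (hkpos : ∀ n, 0 < k n)
    (n0 L : ℕ) (hL : 0 < L) (q : ℕ) :
    ∑ t ∈ range (q * L), (1:ℝ) / k (n0 + t) ≤ L * ∑ j ∈ range q, (1:ℝ) / k (n0 + j * L) := by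
  induction q with
  | zero => simp
  | succ q ih =>
      have hsplit : ∑ t ∈ range ((q+1) * L), (1:ℝ) / k (n0 + t)
          = ∑ t ∈ range (q * L), (1:ℝ) / k (n0 + t)
            + ∑ t ∈ Finset.Ico (q*L) ((q+1)*L), (1:ℝ) / k (n0 + t) := by
        rw [range_eq_Ico, range_eq_Ico]
        exact (Finset.sum_Ico_consecutive (fun t => (1:ℝ) / k (n0 + t)) (Nat.zero_le _) (show q*L ≤ (q+1)*L by nlinarith)).symm
      have hblock : ∑ t ∈ Finset.Ico (q*L) ((q+1)*L), (1:ℝ) / k (n0 + t)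
          ≤ L * ((1:ℝ) / k (n0 + q * L)) := by
        have h2 := Finset.sum_le_card_nsmul (Finset.Ico (q*L) ((q+1)*L))
          (fun t => (1:ℝ) / k (n0 + t)) ((1:ℝ) / k (n0 + q * L)) ?_
        · have hcard : (Finset.Ico (q*L) ((q+1)*L)).card = L := by
            rw [Nat.card_Ico, Nat.succ_mul]; omega
          rw [hcard, nsmul_eq_mul] at h2
          exact h2
        · intro t ht
          simp only [Finset.mem_Ico] at ht
          have hle : k (n0 + q * L) ≤ k (n0 + t) := hk.monotone (by omega)
          apply one_div_le_one_div_of_le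
          · exact_mod_cast hkpos _
          · exact_mod_cast hle
      rw [hsplit, Finset.sum_range_succ]
      push_cast
      linarith

lemma div_sub {k : ℕ → ℕ} (hk : StrictMono k) (hkpos : ∀ n, 0 < k n)
    (hdiv : ¬ Summable (fun n => (1 : ℝ) / k n))
    (n0 L : ℕ) (hL : 0 < L) (C : ℝ) :
    ∃ q : ℕ, 0 < q ∧ C ≤ ∑ j ∈ range q, (1:ℝ) / k (n0 + j * L) := by
  have hf : ∀ n, 0 ≤ (1:ℝ) / k n := fun n => by positivity
  have htop := (not_summable_iff_tendsto_nat_atTop_of_nonneg hf).mp hdiv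
  obtain ⟨m, hm⟩ := (Filter.tendsto_atTop.mp htop (L * C + n0)).exists
  refine ⟨m + 1, Nat.succ_pos m, ?_⟩
  have hmono : ∑ n ∈ range m, (1:ℝ) / k n ≤ ∑ n ∈ range (n0 + (m+1) * L), (1:ℝ) / k n := by
    apply Finset.sum_le_sum_of_subset_of_nonneg
    · apply Finset.range_subset_range.mpr; nlinarith [hL]
    · intro i _ _; exact hf i
  have hsplit : ∑ n ∈ range (n0 + (m+1) * L), (1:ℝ) / k n
      = ∑ n ∈ range n0, (1:ℝ) / k n + ∑ t ∈ range ((m+1) * L), (1:ℝ) / k (n0 + t) := by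
    rw [Finset.sum_range_add]
  have hhead : ∑ n ∈ range n0, (1:ℝ) / k n ≤ n0 := by
    calc ∑ n ∈ range n0, (1:ℝ) / k n ≤ ∑ n ∈ range n0, (1:ℝ) := by
          apply Finset.sum_le_sum
          intro i _
          rw [div_le_one (by exact_mod_cast hkpos i)]
          exact_mod_cast hkpos i
      _ = n0 := by simp
  have hblock := block_bound hk hkpos n0 L hL (m+1)
  have hLpos : (0:ℝ) < L := by exact_mod_cast hL
  have key : L * C ≤ L * ∑ j ∈ range (m+1), (1:ℝ) / k (n0 + j * L) := by linarith
  exact le_of_mul_le_mul_left key hLpos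

section Core

variable {k : ℕ → ℕ}
  (B : lp (fun _ : ℕ => ℂ) 2 →L[ℂ] lp (fun _ : ℕ => ℂ) 2)

lemma core (hk : StrictMono k) (hkpos : ∀ n, 0 < k n)
    (hdiv : ¬ Summable (fun n => (1 : ℝ) / k n))
    (hB : ∀ (x : lp (fun _ : ℕ => ℂ) 2) (n : ℕ), B x n = x (n + 1))
    {a b : ℝ} (ha : 1 < a) (hab : a ≤ b)
    (cu : ℕ → ℂ) (Nu : ℕ) (cv : ℕ → ℂ) (Nv : ℕ)
    {ε δ : ℝ} (hε : 0 < ε) (hδ : 0 < δ) :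
    ∃ x, ‖x - sh cv Nv 0‖ ≤ ε ∧ ∀ l ∈ Set.Icc a b, ∃ n : ℕ,
      ‖(l:ℂ)^(k n) • ((B^(k n)) x) - sh cu Nu 0‖ ≤ δ := by
  set u := sh cu Nu 0 with hu
  set v := sh cv Nv 0 with hv
  set M := ‖u‖ with hM
  have hM0 : 0 ≤ M := norm_nonneg u
  have ha0 : (0:ℝ) < a := by linarith
  have hainv1 : a⁻¹ < 1 := inv_lt_one_of_one_lt₀ ha
  have hainv0 : (0:ℝ) ≤ a⁻¹ := by positivity
  -- choice of δ'
  set δ' : ℝ := min 1 (δ / (2 * (M + 1))) with hδ'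
  have hδ'0 : 0 < δ' := lt_min one_pos (by positivity)
  have hδ'M : δ' * M ≤ δ / 2 := by
    have h1 : δ' ≤ δ / (2 * (M + 1)) := min_le_right _ _
    have h4 : (δ / (2 * (M + 1))) * (M + 1) = δ / 2 := by field_simp
    nlinarith [hδ.le]
  -- choice of L
  obtain ⟨L2, hL2⟩ := exists_pow_lt_of_lt_one
    (show (0:ℝ) < min (1/2) (δ / (4 * (M + 1))) from lt_min (by norm_num) (by positivity)) hainv1
  set L := L2 + max Nu Nv + 1 with hL
  have hLpos : 0 < L := by omega
  have hLNu : Nu ≤ L := by omega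
  have hLNv : Nv ≤ L := by omega
  set r := a⁻¹ ^ L with hr
  have hrL2 : r ≤ a⁻¹ ^ L2 := pow_le_pow_of_le_one hainv0 hainv1.le (by omega)
  have hr_half : r ≤ 1/2 := le_trans hrL2 (le_trans hL2.le (min_le_left _ _))
  have hr_δ : r ≤ δ / (4 * (M + 1)) := le_trans hrL2 (le_trans hL2.le (min_le_right _ _))
  have hr0 : 0 ≤ r := by positivity
  have hgeom : ∀ q : ℕ, ∑ j ∈ range q, r ^ j ≤ 2 := by
    intro q
    calc ∑ j ∈ range q, r ^ j ≤ (1 - r)⁻¹ := by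
          rw [← tsum_geometric_of_lt_one hr0 (by linarith)]
          exact Summable.sum_le_tsum _ (fun i _ => by positivity)
            (summable_geometric_of_lt_one hr0 (by linarith))
      _ ≤ 2 := by
          rw [inv_le_comm₀ (by linarith) (by norm_num)]
          linarith
  -- choice of n0
  obtain ⟨m1, hm1⟩ := exists_pow_lt_of_lt_one
    (show (0:ℝ) < ε / (2 * (M + 1)) by positivity) hainv1
  set n0 := m1 + L with hn0
  have hkn0L : L ≤ k n0 := le_trans (by omega) hk.le_apply
  have hkn0m1 : a⁻¹ ^ (k n0) ≤ a⁻¹ ^ m1 :=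
    pow_le_pow_of_le_one hainv0 hainv1.le (le_trans (by omega) hk.le_apply)
  -- the indices
  set nn : ℕ → ℕ := fun j => n0 + j * L with hnn
  have hknn : ∀ i j : ℕ, i ≤ j → k (nn i) + (j - i) * L ≤ k (nn j) := by
    intro i j hij
    have h1 := gap hk (nn i) ((j - i) * L)
    have heq : nn i + (j - i) * L = nn j := by
      simp only [hnn]
      rw [add_assoc, ← Nat.add_mul]
      congr 2
      omega
    rwa [heq] at h1
  have hknn0 : ∀ j : ℕ, k n0 + j * L ≤ k (nn j) := by
    intro j
    have h1 := gap hk n0 (j * L)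
    simpa only [hnn] using h1
  have h1δ'0 : (0:ℝ) < 1 + δ' := by linarith
  have h1δ'1 : (1:ℝ) < 1 + δ' := by linarith
  -- the lambdas
  set Λ : ℕ → ℝ := fun j => a * (1 + δ') ^ (∑ i ∈ range j, (1:ℝ) / k (nn i)) with hΛ
  have hΛ0 : Λ 0 = a := by simp only [hΛ, Finset.range_zero, Finset.sum_empty, Real.rpow_zero, mul_one]
  have hΛpos : ∀ j, 0 < Λ j := fun j => mul_pos ha0 (Real.rpow_pos_of_pos h1δ'0 _)
  have hΛa : ∀ j, a ≤ Λ j := by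
    intro j
    have h1 : (1:ℝ) ≤ (1 + δ') ^ (∑ i ∈ range j, (1:ℝ) / k (nn i)) := by
      have h2 : (1+δ') ^ (0:ℝ) ≤ (1+δ') ^ (∑ i ∈ range j, (1:ℝ) / k (nn i)) :=
        (Real.rpow_le_rpow_left_iff h1δ'1).mpr (by positivity)
      rwa [Real.rpow_zero] at h2
    simp only [hΛ]
    nlinarith [ha0]
  have hΛmono : Monotone Λ := by
    intro i j hij
    have h1 : (∑ t ∈ range i, (1:ℝ) / k (nn t)) ≤ ∑ t ∈ range j, (1:ℝ) / k (nn t) := by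
      apply Finset.sum_le_sum_of_subset_of_nonneg (Finset.range_subset_range.mpr hij)
      intro t _ _; positivity
    have h2 := (Real.rpow_le_rpow_left_iff h1δ'1).mpr h1
    simp only [hΛ]
    nlinarith [Real.rpow_pos_of_pos h1δ'0 (∑ t ∈ range i, (1:ℝ) / k (nn t))]
  have hΛsucc : ∀ j, Λ (j+1) = Λ j * (1 + δ') ^ ((1:ℝ) / k (nn j)) := by
    intro j
    simp only [hΛ, Finset.sum_range_succ, Real.rpow_add h1δ'0]
    ring
  -- choice of q
  obtain ⟨q, hq0, hqC⟩ := div_sub hk hkpos hdiv n0 L hLpos (Real.logb (1 + δ') (b / a))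
  have hbΛq : b ≤ Λ q := by
    have hba : (0:ℝ) < b / a := div_pos (by linarith) ha0
    have h1 : b / a ≤ (1 + δ') ^ (∑ j ∈ range q, (1:ℝ) / k (nn j)) := by
      rw [← Real.rpow_logb h1δ'0 (by linarith) hba]
      exact (Real.rpow_le_rpow_left_iff h1δ'1).mpr hqC
    simp only [hΛ]
    calc b = a * (b / a) := by field_simp
      _ ≤ _ := by nlinarith
  -- the weights
  set γ : ℕ → ℝ := fun j => (Λ j) ^ (k (nn j)) with hγ
  have hγpos : ∀ j, 0 < γ j := fun j => pow_pos (hΛpos j) _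
  have hγbound : ∀ j : ℕ, (γ j)⁻¹ ≤ a⁻¹ ^ (k n0) * r ^ j := by
    intro j
    have h1 : (γ j)⁻¹ ≤ (a ^ (k (nn j)))⁻¹ :=
      inv_anti₀ (by positivity) (pow_le_pow_left₀ ha0.le (hΛa j) _)
    have h2 : (a ^ (k (nn j)))⁻¹ = a⁻¹ ^ (k (nn j)) := by rw [inv_pow]
    have h3 : a⁻¹ ^ (k (nn j)) ≤ a⁻¹ ^ (k n0 + j * L) :=
      pow_le_pow_of_le_one hainv0 hainv1.le (hknn0 j)
    calc (γ j)⁻¹ ≤ a⁻¹ ^ (k (nn j)) := by rw [← h2]; exact h1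
      _ ≤ a⁻¹ ^ (k n0 + j * L) := h3
      _ = a⁻¹ ^ (k n0) * r ^ j := by rw [hr, pow_add, pow_mul']
  set x := v + ∑ j ∈ range q, (((γ j)⁻¹ : ℝ) : ℂ) • sh cu Nu (k (nn j)) with hx
  have hMsh : ∀ p : ℕ, ‖sh cu Nu p‖ = M := fun p => norm_sh cu Nu p
  refine ⟨x, ?_, ?_⟩
  · -- approximation bound
    have h1 : x - v = ∑ j ∈ range q, (((γ j)⁻¹ : ℝ) : ℂ) • sh cu Nu (k (nn j)) := by
      rw [hx]; abel
    rw [h1]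
    have h4 : (2 * (M+1)) * (ε / (2 * (M+1))) = ε := by field_simp
    calc ‖∑ j ∈ range q, (((γ j)⁻¹:ℝ):ℂ) • sh cu Nu (k (nn j))‖
        ≤ ∑ j ∈ range q, ‖(((γ j)⁻¹:ℝ):ℂ) • sh cu Nu (k (nn j))‖ := norm_sum_le _ _
      _ = ∑ j ∈ range q, (γ j)⁻¹ * M := by
          refine Finset.sum_congr rfl fun j _ => ?_
          rw [norm_smul, Complex.norm_real, Real.norm_eq_abs,
            abs_of_pos (inv_pos.mpr (hγpos j)), hMsh]
      _ ≤ ∑ j ∈ range q, (a⁻¹ ^ (k n0) * r ^ j) * M := by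
          apply Finset.sum_le_sum; intro j _
          exact mul_le_mul_of_nonneg_right (hγbound j) hM0
      _ = a⁻¹ ^ (k n0) * M * ∑ j ∈ range q, r ^ j := by
          rw [Finset.mul_sum]; refine Finset.sum_congr rfl fun j _ => by ring
      _ ≤ a⁻¹ ^ (k n0) * M * 2 := by
          have h2 := hgeom q
          have h3 : (0:ℝ) ≤ a⁻¹ ^ (k n0) * M := by positivity
          nlinarith
      _ ≤ ε := by
          have h2 : a⁻¹ ^ (k n0) ≤ ε / (2*(M+1)) := le_trans hkn0m1 hm1.le
          nlinarith [pow_nonneg hainv0 (k n0), hε.le]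
  · -- the orbit approximates u for every l ∈ [a,b]
    rintro l ⟨hal, hlb⟩
    have hl0 : (0:ℝ) < l := by linarith
    have hJne : ((range q).filter (fun t => Λ t ≤ l)).Nonempty :=
      ⟨0, Finset.mem_filter.mpr ⟨Finset.mem_range.mpr hq0, le_of_eq_of_le hΛ0 hal⟩⟩
    set j := ((range q).filter (fun t => Λ t ≤ l)).max' hJne with hj
    have hjmem : j ∈ (range q).filter (fun t => Λ t ≤ l) := Finset.max'_mem _ hJne
    have hjq : j < q := Finset.mem_range.mp (Finset.mem_of_mem_filter j hjmem)
    have hΛjl : Λ j ≤ l := (Finset.mem_filter.mp hjmem).2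
    have hlΛj1 : l ≤ Λ (j + 1) := by
      by_cases hc : j + 1 < q
      · by_contra hcon
        push_neg at hcon
        have hmem : j + 1 ∈ (range q).filter (fun t => Λ t ≤ l) :=
          Finset.mem_filter.mpr ⟨Finset.mem_range.mpr hc, hcon.le⟩
        have h9 := Finset.le_max' _ (j+1) hmem
        rw [← hj] at h9
        omega
      · have hjq1 : j + 1 = q := by omega
        rw [hjq1]
        linarith
    refine ⟨nn j, ?_⟩
    set K := k (nn j) with hK
    have hKpos : 0 < K := hkpos _
    have hKL : L ≤ K := le_trans hkn0L (by have := hknn0 j; omega)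
    have hBv : (B^K) v = 0 := Bpow_sh_zero B hB cv Nv K (le_trans hLNv hKL)
    have hterm_lt : ∀ i, i < j → (B^K) (sh cu Nu (k (nn i))) = 0 := by
      intro i hij
      have hgap := hknn i j hij.le
      have hLji : L ≤ (j - i) * L := Nat.le_mul_of_pos_left L (by omega)
      have hki : k (nn i) + L ≤ K := by omega
      have hsplitK : K = (K - k (nn i)) + k (nn i) := by omega
      rw [hsplitK, pow_add, ContinuousLinearMap.mul_apply,
        Bpow_sh B hB cu Nu (k (nn i)) (k (nn i)) le_rfl, Nat.sub_self]
      exact Bpow_sh_zero B hB cu Nu _ (by omega)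
    have hterm_ge : ∀ i, j ≤ i → (B^K) (sh cu Nu (k (nn i))) = sh cu Nu (k (nn i) - K) := by
      intro i hij
      apply Bpow_sh B hB cu Nu K _ _
      exact hk.monotone (Nat.add_le_add_left (Nat.mul_le_mul_right L hij) n0)
    have hBx : (B^K) x = (((γ j)⁻¹:ℝ):ℂ) • u
        + ∑ i ∈ Finset.Ico (j+1) q, (((γ i)⁻¹:ℝ):ℂ) • sh cu Nu (k (nn i) - K) := by
      rw [hx, map_add, hBv, zero_add, map_sum]
      simp only [map_smul]
      have hsplit : ∑ i ∈ range q, (((γ i)⁻¹:ℝ):ℂ) • (B^K) (sh cu Nu (k (nn i)))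
          = ∑ i ∈ range (j+1), (((γ i)⁻¹:ℝ):ℂ) • (B^K) (sh cu Nu (k (nn i)))
            + ∑ i ∈ Finset.Ico (j+1) q, (((γ i)⁻¹:ℝ):ℂ) • (B^K) (sh cu Nu (k (nn i))) := by
        rw [range_eq_Ico, range_eq_Ico]
        exact (Finset.sum_Ico_consecutive (fun i => (((γ i)⁻¹:ℝ):ℂ) • (B^K) (sh cu Nu (k (nn i)))) (Nat.zero_le _) (show j+1 ≤ q by omega)).symm
      rw [hsplit, Finset.sum_range_succ]
      have hzero : ∑ i ∈ range j, (((γ i)⁻¹:ℝ):ℂ) • (B^K) (sh cu Nu (k (nn i))) = 0 :=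
        Finset.sum_eq_zero fun i hi => by
          rw [hterm_lt i (Finset.mem_range.mp hi), smul_zero]
      rw [hzero, zero_add]
      have hjj : (B^K) (sh cu Nu (k (nn j))) = u := by
        rw [hterm_ge j le_rfl, ← hK, Nat.sub_self, hu]
      rw [hjj]
      congr 1
      refine Finset.sum_congr rfl fun i hi => ?_
      rw [hterm_ge i (by rw [Finset.mem_Ico] at hi; omega)]
    have horb : (l:ℂ)^K • (B^K) x - u
        = (((l^K * (γ j)⁻¹ - 1 : ℝ)):ℂ) • u
          + ∑ i ∈ Finset.Ico (j+1) q, (((l^K * (γ i)⁻¹ : ℝ)):ℂ) • sh cu Nu (k (nn i) - K) := by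
      rw [hBx, smul_add, Finset.smul_sum]
      simp only [smul_smul]
      push_cast
      rw [sub_smul, one_smul]
      abel
    rw [horb]
    -- main term bound
    have hγjK : γ j = (Λ j)^K := by rw [hγ]
    have hγjpos : (0:ℝ) < (Λ j)^K := pow_pos (hΛpos j) K
    have ht1 : 1 ≤ l^K * (γ j)⁻¹ := by
      rw [hγjK, ← div_eq_mul_inv, le_div_iff₀ hγjpos, one_mul]
      exact pow_le_pow_left₀ (hΛpos j).le hΛjl K
    have ht2 : l^K * (γ j)⁻¹ ≤ 1 + δ' := by
      have h1 : l ≤ Λ j * (1+δ') ^ ((1:ℝ)/K) := by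
        have := hΛsucc j
        rw [← hK] at this
        rw [← this]
        exact hlΛj1
      have h2 : l^K ≤ (Λ j * (1+δ') ^ ((1:ℝ)/K))^K :=
        pow_le_pow_left₀ hl0.le h1 K
      have h3 : ((1+δ') ^ ((1:ℝ)/K))^K = 1 + δ' := by
        rw [← Real.rpow_natCast ((1+δ') ^ ((1:ℝ)/(K:ℝ))) K, ← Real.rpow_mul h1δ'0.le]
        rw [show (1:ℝ)/(K:ℝ) * (K:ℕ) = 1 by
          field_simp]
        rw [Real.rpow_one]
      have h4 : l^K ≤ (Λ j)^K * (1 + δ') := by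
        rw [mul_pow, h3] at h2
        exact h2
      calc l^K * (γ j)⁻¹ ≤ ((Λ j)^K * (1+δ')) * (γ j)⁻¹ :=
            mul_le_mul_of_nonneg_right h4 (inv_nonneg.mpr (hγpos j).le)
        _ = 1 + δ' := by
            rw [hγjK]
            field_simp
    have hn1 : ‖(((l^K * (γ j)⁻¹ - 1 : ℝ)):ℂ) • u‖ ≤ δ' * M := by
      rw [norm_smul, Complex.norm_real, Real.norm_eq_abs, ← hM]
      have habs : |l^K * (γ j)⁻¹ - 1| ≤ δ' := by
        rw [abs_le]
        constructor <;> linarith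
      exact mul_le_mul_of_nonneg_right habs hM0
    -- tail bound
    have hn2 : ∀ i ∈ Finset.Ico (j+1) q,
        ‖(((l^K * (γ i)⁻¹ : ℝ)):ℂ) • sh cu Nu (k (nn i) - K)‖ ≤ r^(i-j) * M := by
      intro i hi
      rw [Finset.mem_Ico] at hi
      rw [norm_smul, Complex.norm_real, Real.norm_eq_abs, hMsh]
      have hji : j + 1 ≤ i := hi.1
      have hΛipos := hΛpos i
      have hcoef : l^K * (γ i)⁻¹ ≤ r^(i-j) := by
        have h1 : l ≤ Λ i := le_trans hlΛj1 (hΛmono hji)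
        have h2 : l^K ≤ (Λ i)^K := pow_le_pow_left₀ hl0.le h1 K
        have hgap := hknn j i (by omega)
        have h3 : k (nn i) = (k (nn i) - K) + K := by omega
        have h4 : γ i = (Λ i)^(k (nn i) - K) * (Λ i)^K := by
          rw [hγ, ← pow_add, ← h3]
        have hpos1 : (0:ℝ) < (Λ i)^(k (nn i) - K) := pow_pos hΛipos _
        have hpos2 : (0:ℝ) < (Λ i)^K := pow_pos hΛipos _
        have h5 : l^K * (γ i)⁻¹ ≤ ((Λ i)^(k (nn i) - K))⁻¹ := by
          rw [h4, mul_inv]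
          calc l^K * (((Λ i)^(k (nn i) - K))⁻¹ * ((Λ i)^K)⁻¹)
              = (l^K * ((Λ i)^K)⁻¹) * ((Λ i)^(k (nn i) - K))⁻¹ := by ring
            _ ≤ 1 * ((Λ i)^(k (nn i) - K))⁻¹ := by
                apply mul_le_mul_of_nonneg_right _ (by positivity)
                rw [← div_eq_mul_inv, div_le_one hpos2]
                exact h2
            _ = ((Λ i)^(k (nn i) - K))⁻¹ := one_mul _
        have h6 : ((Λ i)^(k (nn i) - K))⁻¹ ≤ a⁻¹^(k (nn i) - K) := by
          rw [← inv_pow]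
          exact pow_le_pow_left₀ (by positivity) (inv_anti₀ ha0 (hΛa i)) _
        have h7 : a⁻¹^(k (nn i) - K) ≤ a⁻¹^((i - j) * L) :=
          pow_le_pow_of_le_one hainv0 hainv1.le (by omega)
        have h8 : a⁻¹^((i-j)*L) = r^(i-j) := by rw [hr, pow_mul']
        calc l^K * (γ i)⁻¹ ≤ ((Λ i)^(k (nn i) - K))⁻¹ := h5
          _ ≤ a⁻¹^(k (nn i) - K) := h6
          _ ≤ a⁻¹^((i - j) * L) := h7
          _ = r^(i-j) := h8
      have hge0 : 0 ≤ l^K * (γ i)⁻¹ :=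
        mul_nonneg (pow_nonneg hl0.le K) (inv_nonneg.mpr (hγpos i).le)
      rw [abs_of_nonneg hge0]
      exact mul_le_mul_of_nonneg_right hcoef hM0
    have hsum2 : ∑ i ∈ Finset.Ico (j+1) q, r^(i-j) * M ≤ δ/2 := by
      have he : ∑ i ∈ Finset.Ico (j+1) q, r^(i-j) * M
          = ∑ t ∈ range (q - (j+1)), r^(t+1) * M := by
        rw [Finset.sum_Ico_eq_sum_range]
        refine Finset.sum_congr rfl fun t _ => ?_
        congr 2
        omega
      have he2 : ∑ t ∈ range (q - (j+1)), r^(t+1) * M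
          = r * M * ∑ t ∈ range (q - (j+1)), r^t := by
        rw [Finset.mul_sum]; refine Finset.sum_congr rfl fun t _ => by ring
      have hg := hgeom (q - (j+1))
      have h5 : r * M * ∑ t ∈ range (q-(j+1)), r^t ≤ r * M * 2 :=
        mul_le_mul_of_nonneg_left hg (by positivity)
      have h4 : (M+1) * (δ/(4*(M+1))) = δ/4 := by field_simp
      have hM1r : (M+1) * r ≤ (M+1) * (δ/(4*(M+1))) :=
        mul_le_mul_of_nonneg_left hr_δ (by linarith)
      have h6 : r * M ≤ r * (M+1) := mul_le_mul_of_nonneg_left (by linarith) hr0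
      have h7 : r * (M+1) = (M+1) * r := mul_comm _ _
      have hrδ2 : r * M * 2 ≤ δ / 2 := by linarith
      rw [he, he2]
      linarith
    calc ‖(((l^K * (γ j)⁻¹ - 1 : ℝ)):ℂ) • u
          + ∑ i ∈ Finset.Ico (j+1) q, (((l^K * (γ i)⁻¹ : ℝ)):ℂ) • sh cu Nu (k (nn i) - K)‖
        ≤ ‖(((l^K * (γ j)⁻¹ - 1 : ℝ)):ℂ) • u‖
          + ‖∑ i ∈ Finset.Ico (j+1) q, (((l^K * (γ i)⁻¹ : ℝ)):ℂ) • sh cu Nu (k (nn i) - K)‖ :=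
          norm_add_le _ _
      _ ≤ δ' * M + ∑ i ∈ Finset.Ico (j+1) q, r^(i-j) * M :=
          add_le_add hn1 (le_trans (norm_sum_le _ _) (Finset.sum_le_sum hn2))
      _ ≤ δ/2 + δ/2 := add_le_add hδ'M hsum2
      _ = δ := by ring

end Core
section Rest

variable {k : ℕ → ℕ}
  (B : lp (fun _ : ℕ => ℂ) 2 →L[ℂ] lp (fun _ : ℕ => ℂ) 2)

lemma orbit_eq (l : ℝ) (n : ℕ) (x : lp (fun _ : ℕ => ℂ) 2) :
    (((l:ℂ) • B) ^ n) x = (l:ℂ)^n • ((B^n) x) := by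
  rw [smul_pow, ContinuousLinearMap.smul_apply]

lemma G_open (y : lp (fun _ : ℕ => ℂ) 2) (ρ a b : ℝ) :
    IsOpen {x : lp (fun _ : ℕ => ℂ) 2 |
      ∀ l ∈ Set.Icc a b, ∃ n : ℕ, (((l:ℂ) • B) ^ k n) x ∈ Metric.ball y ρ} := by
  rw [isOpen_iff_mem_nhds]
  intro x hx
  have hcont : ∀ n : ℕ, Continuous
      (fun p : ℝ × lp (fun _ : ℕ => ℂ) 2 => (((p.1:ℂ) • B) ^ k n) p.2) := by
    intro n
    have heq : (fun p : ℝ × lp (fun _ : ℕ => ℂ) 2 => (((p.1:ℂ) • B) ^ k n) p.2)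
        = fun p : ℝ × lp (fun _ : ℕ => ℂ) 2 => ((p.1:ℂ))^(k n) • ((B^(k n)) p.2) := by
      funext p; exact orbit_eq B p.1 (k n) p.2
    rw [heq]
    exact Continuous.smul ((Complex.continuous_ofReal.comp continuous_fst).pow _)
      ((B^(k n)).continuous.comp continuous_snd)
  set U := ⋃ n : ℕ,
    (fun p : ℝ × lp (fun _ : ℕ => ℂ) 2 => (((p.1:ℂ) • B) ^ k n) p.2) ⁻¹' Metric.ball y ρ
    with hU
  have hUopen : IsOpen U :=
    isOpen_iUnion fun n => (hcont n).isOpen_preimage _ Metric.isOpen_ball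
  have hsub : Set.Icc a b ×ˢ ({x} : Set (lp (fun _ : ℕ => ℂ) 2)) ⊆ U := by
    rintro ⟨l, z⟩ ⟨hl, hz⟩
    rw [Set.mem_singleton_iff] at hz
    subst hz
    obtain ⟨n, hn⟩ := hx l hl
    exact Set.mem_iUnion.mpr ⟨n, hn⟩
  obtain ⟨u', v', _, hv'o, hIu, hxv, huv⟩ :=
    generalized_tube_lemma isCompact_Icc isCompact_singleton hUopen hsub
  apply Filter.mem_of_superset (hv'o.mem_nhds (hxv rfl))
  intro z hz l hl
  have hmem : (l, z) ∈ U := huv ⟨hIu hl, hz⟩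
  obtain ⟨n, hn⟩ := Set.mem_iUnion.mp hmem
  exact ⟨n, hn⟩

lemma G_dense (hk : StrictMono k) (hkpos : ∀ n, 0 < k n)
    (hdiv : ¬ Summable (fun n => (1 : ℝ) / k n))
    (hB : ∀ (x : lp (fun _ : ℕ => ℂ) 2) (n : ℕ), B x n = x (n + 1))
    {a b : ℝ} (ha : 1 < a) (hab : a ≤ b)
    (y : lp (fun _ : ℕ => ℂ) 2) {ρ : ℝ} (hρ : 0 < ρ) :
    Dense {x : lp (fun _ : ℕ => ℂ) 2 |
      ∀ l ∈ Set.Icc a b, ∃ n : ℕ, (((l:ℂ) • B) ^ k n) x ∈ Metric.ball y ρ} := by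
  rw [Metric.dense_iff]
  intro z ε hε
  obtain ⟨Nu, cu, hcu⟩ := approx y (show (0:ℝ) < ρ/4 by linarith)
  obtain ⟨Nv, cv, hcv⟩ := approx z (show (0:ℝ) < ε/2 by linarith)
  obtain ⟨x, hxv, hxorb⟩ := core B hk hkpos hdiv hB ha hab cu Nu cv Nv
    (show (0:ℝ) < ε/4 by linarith) (show (0:ℝ) < ρ/2 by linarith)
  refine ⟨x, ?_, ?_⟩
  · rw [Metric.mem_ball, dist_eq_norm]
    calc ‖x - z‖ = ‖(x - sh cv Nv 0) - (z - sh cv Nv 0)‖ := by abel_nf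
      _ ≤ ‖x - sh cv Nv 0‖ + ‖z - sh cv Nv 0‖ := norm_sub_le _ _
      _ < ε := by linarith
  · intro l hl
    obtain ⟨n, hn⟩ := hxorb l hl
    refine ⟨n, ?_⟩
    rw [Metric.mem_ball, dist_eq_norm, orbit_eq B l (k n) x]
    calc ‖(l:ℂ)^(k n) • ((B^(k n)) x) - y‖
        = ‖((l:ℂ)^(k n) • ((B^(k n)) x) - sh cu Nu 0) - (y - sh cu Nu 0)‖ := by abel_nf
      _ ≤ ‖(l:ℂ)^(k n) • ((B^(k n)) x) - sh cu Nu 0‖ + ‖y - sh cu Nu 0‖ := norm_sub_le _ _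
      _ < ρ := by linarith

lemma sep : TopologicalSpace.SeparableSpace (lp (fun _ : ℕ => ℂ) 2) := by
  have hdense : Dense ((Submodule.span ℂ (Set.range ee) : Submodule ℂ (lp (fun _ : ℕ => ℂ) 2))
      : Set (lp (fun _ : ℕ => ℂ) 2)) := by
    intro f
    have hsum := lp.hasSum_single (E := fun _ : ℕ => ℂ) (p := 2) (by norm_num) f
    apply mem_closure_of_tendsto hsum
    apply Filter.Eventually.of_forall
    intro s
    apply Submodule.sum_mem
    intro i _
    rw [← smul_ee (f i) i]
    exact Submodule.smul_mem _ _ (Submodule.subset_span ⟨i, rfl⟩)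
  have h1 : TopologicalSpace.IsSeparable
      ((Submodule.span ℂ (Set.range ee) : Submodule ℂ (lp (fun _ : ℕ => ℂ) 2))
      : Set (lp (fun _ : ℕ => ℂ) 2)) :=
    (Set.countable_range ee).isSeparable.span
  have h2 := h1.closure
  rw [hdense.closure_eq] at h2
  exact TopologicalSpace.isSeparable_univ_iff.mp h2

end Rest
end Stmt11

open Stmt11 in
theorem stmt_11 (k : ℕ → ℕ) (hk : StrictMono k) (hkpos : ∀ n, 0 < k n)
    (hdiv : ¬ Summable (fun n => (1 : ℝ) / k n))
    (B : lp (fun _ : ℕ => ℂ) 2 →L[ℂ] lp (fun _ : ℕ => ℂ) 2)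
    (hB : ∀ (x : lp (fun _ : ℕ => ℂ) 2) (n : ℕ), B x n = x (n + 1)) :
    (⋂ l ∈ Set.Ioi (1:ℝ),
      {x : lp (fun _ : ℕ => ℂ) 2 |
        Dense (Set.range fun n => (((l : ℂ) • B) ^ k n) x)})
      ∈ residual (lp (fun _ : ℕ => ℂ) 2) ∧
    (⋂ l ∈ Set.Ioi (1:ℝ),
      {x : lp (fun _ : ℕ => ℂ) 2 |
        Dense (Set.range fun n => (((l : ℂ) • B) ^ k n) x)}) ≠ ∅ := by
  classical
  haveI : Nonempty (lp (fun _ : ℕ => ℂ) 2) := ⟨0⟩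
  haveI := Stmt11.sep
  obtain ⟨d, hd⟩ := TopologicalSpace.exists_dense_seq (lp (fun _ : ℕ => ℂ) 2)
  set T : Set (lp (fun _ : ℕ => ℂ) 2) := ⋂ (i : ℕ), ⋂ (p : ℕ), ⋂ (m : ℕ),
    {x | ∀ l ∈ Set.Icc (1 + 1/((m:ℝ)+1)) ((m:ℝ)+2), ∃ n,
      (((l:ℂ) • B) ^ k n) x ∈ Metric.ball (d i) (1/((p:ℝ)+1))} with hT
  have hTres : T ∈ residual (lp (fun _ : ℕ => ℂ) 2) := by
    rw [hT]
    refine countable_iInter_mem.mpr fun i => countable_iInter_mem.mpr fun p =>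
      countable_iInter_mem.mpr fun m => ?_
    apply residual_of_dense_open
    · exact Stmt11.G_open B (d i) _ _ _
    · apply Stmt11.G_dense B hk hkpos hdiv hB
      · have h0 : (0:ℝ) < 1/((m:ℝ)+1) := by positivity
        linarith
      · have h0 : 1/((m:ℝ)+1) ≤ 1 := by
          rw [div_le_one (by positivity)]
          have := Nat.cast_nonneg (α := ℝ) m
          linarith
        linarith
      · positivity
  have hsub : T ⊆ ⋂ l ∈ Set.Ioi (1:ℝ),
      {x : lp (fun _ : ℕ => ℂ) 2 |
        Dense (Set.range fun n => (((l : ℂ) • B) ^ k n) x)} := by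
    intro x hx
    apply Set.mem_iInter₂.mpr
    intro l hl
    rw [Set.mem_Ioi] at hl
    rw [Set.mem_setOf_eq, Metric.dense_iff]
    intro y ρ hρ
    obtain ⟨m, hm⟩ := exists_nat_gt (max ((l-1)⁻¹) l)
    have hm1 : (l-1)⁻¹ < (m:ℝ) := lt_of_le_of_lt (le_max_left _ _) hm
    have hm2 : l < (m:ℝ) := lt_of_le_of_lt (le_max_right _ _) hm
    have hl1 : (0:ℝ) < l - 1 := by linarith
    have ha1 : (1:ℝ) + 1/((m:ℝ)+1) ≤ l := by
      have h5 : (l-1)⁻¹ < (m:ℝ)+1 := by linarith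
      have h6 := inv_strictAnti₀ (inv_pos.mpr hl1) h5
      rw [inv_inv] at h6
      have h7 : 1/((m:ℝ)+1) = ((m:ℝ)+1)⁻¹ := one_div _
      linarith
    have ha2 : l ≤ (m:ℝ) + 2 := by linarith
    obtain ⟨p, hp⟩ := exists_nat_gt (2/ρ)
    have hpρ : 1/((p:ℝ)+1) < ρ/2 := by
      have h7 : (2:ℝ)/ρ < (p:ℝ)+1 := by linarith
      have h8 : 2 < ((p:ℝ)+1)*ρ := (div_lt_iff₀ hρ).mp h7
      rw [div_lt_div_iff₀ (by positivity) (by norm_num : (0:ℝ) < 2)]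
      nlinarith
    obtain ⟨i, hi⟩ := Metric.denseRange_iff.mp hd y (ρ/2) (by linarith)
    have hxG := Set.mem_iInter.mp (Set.mem_iInter.mp (Set.mem_iInter.mp hx i) p) m
    obtain ⟨n, hn⟩ := hxG l ⟨ha1, ha2⟩
    refine ⟨(((l:ℂ) • B) ^ k n) x, ?_, Set.mem_range_self n⟩
    rw [Metric.mem_ball] at hn ⊢
    calc dist ((((l:ℂ) • B) ^ k n) x) y
        ≤ dist ((((l:ℂ) • B) ^ k n) x) (d i) + dist (d i) y := dist_triangle _ _ _
      _ < 1/((p:ℝ)+1) + ρ/2 := by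
          have h9 : dist (d i) y < ρ/2 := by rw [dist_comm]; exact hi
          exact add_lt_add hn h9
      _ < ρ := by linarith
  have hres := Filter.mem_of_superset hTres hsub
  exact ⟨hres, ((dense_of_mem_residual hres).nonempty).ne_empty⟩
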